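/- arXiv:1608.00181 — 6 statements merged into one kernel-verified Lean document; each statement's English description precedes it below -/
import Mathlib

section
/- A nonzero Kronecker module M of type (2,2) on V is semistable if and only if there do not exist A, B ∈ SL₂(ℂ) such that the 2×2 matrix of linear functionals x ↦ A·M(x)·B has an identically vanishing row or an identically vanishing column; equivalently, M is semistable if and only if M is not SL₂(ℂ)×SL₂(ℂ)-equivalent to a matrix of the form [[g, h],[0, 0]] or [[g, 0],[h, 0]] for some g, h ∈ V*. -/
open Matrix Module Submodule

open Matrix Module Submodule

lemma exists_SL2_column (v : Fin 2 → ℂ) (hv : v ≠ 0) :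
    ∃ S : Matrix.SpecialLinearGroup (Fin 2) ℂ,
      (S : Matrix (Fin 2) (Fin 2) ℂ) *ᵥ Pi.single 0 1 = v := by
  have h01 : v 0 ≠ 0 ∨ v 1 ≠ 0 := by
    by_contra h
    push_neg at h
    exact hv (funext fun k => by fin_cases k <;> simp [h.1, h.2])
  rcases h01 with h | h
  · refine ⟨⟨!![v 0, 0; v 1, (v 0)⁻¹], by
      simp [Matrix.det_fin_two_of, mul_inv_cancel₀ h]⟩, ?_⟩
    funext k; fin_cases k <;> simp
  · refine ⟨⟨!![v 0, -(v 1)⁻¹; v 1, 0], by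
      simp [Matrix.det_fin_two_of, inv_mul_cancel₀ h]⟩, ?_⟩
    funext k; fin_cases k <;> simp

lemma fin2_eq_smul_single (i : Fin 2) (w : Fin 2 → ℂ) (h : w i = 0) :
    w = w (1 - i) • (Pi.single (1 - i) (1 : ℂ) : Fin 2 → ℂ) := by
  funext k; fin_cases i <;> fin_cases k <;>
    simp_all [Pi.single_apply]

lemma sl2_inv_mul (A : Matrix.SpecialLinearGroup (Fin 2) ℂ) :
    ((A⁻¹ : Matrix.SpecialLinearGroup (Fin 2) ℂ) : Matrix (Fin 2) (Fin 2) ℂ) * A = 1 := by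
  rw [← Matrix.SpecialLinearGroup.coe_mul, inv_mul_cancel, Matrix.SpecialLinearGroup.coe_one]

lemma sl2_mul_inv (A : Matrix.SpecialLinearGroup (Fin 2) ℂ) :
    (A : Matrix (Fin 2) (Fin 2) ℂ) * (A⁻¹ : Matrix.SpecialLinearGroup (Fin 2) ℂ) = 1 := by
  rw [← Matrix.SpecialLinearGroup.coe_mul, mul_inv_cancel, Matrix.SpecialLinearGroup.coe_one]



/-- Drezet's semistability for Kronecker modules of type (2,2): for every pair of
subspaces `V₁, V₂ ⊆ ℂ²` with `(V₁,V₂) ≠ (0,0)`, `(V₁,V₂) ≠ (ℂ²,ℂ²)` and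
`M(x)(V₁) ⊆ V₂` for all `x`, one has `dim V₂ ≥ dim V₁`. -/
def KroneckerSemistable {V : Type*} [AddCommGroup V] [Module ℂ V]
    (M : V →ₗ[ℂ] Matrix (Fin 2) (Fin 2) ℂ) : Prop :=
  ∀ V₁ V₂ : Submodule ℂ (Fin 2 → ℂ),
    ¬(V₁ = ⊥ ∧ V₂ = ⊥) → ¬(V₁ = ⊤ ∧ V₂ = ⊤) →
    (∀ (x : V), ∀ w ∈ V₁, (M x).mulVec w ∈ V₂) →
    Module.finrank ℂ V₁ ≤ Module.finrank ℂ V₂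

/-- A nonzero Kronecker module of type (2,2) is semistable iff no
`SL₂×SL₂`-equivalent matrix of linear forms has an identically vanishing row
or an identically vanishing column. -/
theorem kronecker_semistable_iff {V : Type*} [AddCommGroup V] [Module ℂ V]
    [FiniteDimensional ℂ V]
    (M : V →ₗ[ℂ] Matrix (Fin 2) (Fin 2) ℂ) (hM : M ≠ 0) :
    KroneckerSemistable M ↔
      ¬ ∃ A B : Matrix.SpecialLinearGroup (Fin 2) ℂ,
        (∃ i : Fin 2, ∀ (x : V) (j : Fin 2),
          ((A : Matrix (Fin 2) (Fin 2) ℂ) * M x * (B : Matrix (Fin 2) (Fin 2) ℂ)) i j = 0) ∨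
        (∃ j : Fin 2, ∀ (x : V) (i : Fin 2),
          ((A : Matrix (Fin 2) (Fin 2) ℂ) * M x * (B : Matrix (Fin 2) (Fin 2) ℂ)) i j = 0) := by
  have hfr2 : finrank ℂ (Fin 2 → ℂ) = 2 := by simp
  constructor
  · rintro hss ⟨A, B, hrow | hcol⟩
    · -- zero row case
      obtain ⟨i, hrow⟩ := hrow
      set A' : Matrix (Fin 2) (Fin 2) ℂ := ↑A with hA'
      set B' : Matrix (Fin 2) (Fin 2) ℂ := ↑B with hB'
      set Ai : Matrix (Fin 2) (Fin 2) ℂ := ↑(A⁻¹) with hAi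
      set Bi : Matrix (Fin 2) (Fin 2) ℂ := ↑(B⁻¹) with hBi
      set w : Fin 2 → ℂ := Ai *ᵥ Pi.single (1 - i) 1 with hw
      have hmap : ∀ (x : V), ∀ v ∈ (⊤ : Submodule ℂ (Fin 2 → ℂ)),
          (M x) *ᵥ v ∈ Submodule.span ℂ {w} := by
        intro x v _
        have hMx : (M x : Matrix (Fin 2) (Fin 2) ℂ) = Ai * (A' * M x * B') * Bi := by
          simp only [Matrix.mul_assoc]
          rw [hB', hBi, sl2_mul_inv, Matrix.mul_one, hA', hAi, ← Matrix.mul_assoc,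
            sl2_inv_mul, Matrix.one_mul]
        set z : Fin 2 → ℂ := (A' * M x * B') *ᵥ (Bi *ᵥ v) with hz
        have hzi : z i = 0 := by
          simp only [hz, Matrix.mulVec, dotProduct, hrow x, zero_mul]
          simp
        have hzz : z = z (1 - i) • (Pi.single (1 - i) (1 : ℂ) : Fin 2 → ℂ) :=
          fin2_eq_smul_single i z hzi
        have hkey : (M x) *ᵥ v = z (1 - i) • w := by
          conv_lhs => rw [hMx, ← Matrix.mulVec_mulVec, ← Matrix.mulVec_mulVec, ← hz, hzz]
          rw [Matrix.mulVec_smul]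
        rw [hkey]
        exact Submodule.smul_mem _ _ (Submodule.mem_span_singleton_self w)
      have hle1 : finrank ℂ (Submodule.span ℂ {w}) ≤ 1 := by
        rcases eq_or_ne w 0 with h0 | h0
        · rw [h0, Submodule.span_zero_singleton, finrank_bot]
          omega
        · rw [finrank_span_singleton h0]
      have hne : ¬((⊤ : Submodule ℂ (Fin 2 → ℂ)) = ⊤ ∧ Submodule.span ℂ {w} = ⊤) := by
        rintro ⟨-, ht⟩
        rw [ht, finrank_top, hfr2] at hle1
        omega
      have := hss ⊤ (Submodule.span ℂ {w}) (by simp) hne hmap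
      rw [finrank_top, hfr2] at this
      omega
    · -- zero column case
      obtain ⟨j, hcol⟩ := hcol
      set A' : Matrix (Fin 2) (Fin 2) ℂ := ↑A with hA'
      set B' : Matrix (Fin 2) (Fin 2) ℂ := ↑B with hB'
      set Ai : Matrix (Fin 2) (Fin 2) ℂ := ↑(A⁻¹) with hAi
      set Bi : Matrix (Fin 2) (Fin 2) ℂ := ↑(B⁻¹) with hBi
      set w : Fin 2 → ℂ := B' *ᵥ Pi.single j 1 with hw
      have hw0 : w ≠ 0 := by
        intro h0
        have h3 : Bi *ᵥ w = Pi.single j 1 := by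
          rw [hw, Matrix.mulVec_mulVec, hBi, hB', sl2_inv_mul, Matrix.one_mulVec]
        rw [h0] at h3
        simp only [Matrix.mulVec_zero] at h3
        have := congrFun h3 j
        simp at this
      have hmap : ∀ (x : V), ∀ u ∈ Submodule.span ℂ ({w} : Set (Fin 2 → ℂ)),
          (M x) *ᵥ u ∈ (⊥ : Submodule ℂ (Fin 2 → ℂ)) := by
        intro x u hu
        obtain ⟨c, rfl⟩ := Submodule.mem_span_singleton.mp hu
        have key : (M x) *ᵥ w = 0 := by
          have h1 : (A' * M x * B') *ᵥ Pi.single j 1 = 0 := by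
            funext i
            simp [Matrix.mulVec_single, hcol x i]
          have h4 : (M x) *ᵥ w = Ai *ᵥ ((A' * M x * B') *ᵥ Pi.single j 1) := by
            rw [hw, Matrix.mulVec_mulVec, Matrix.mulVec_mulVec, ← Matrix.mul_assoc,
              ← Matrix.mul_assoc, hAi, hA', sl2_inv_mul, Matrix.one_mul]
          rw [h4, h1, Matrix.mulVec_zero]
        rw [Matrix.mulVec_smul, key, smul_zero]
        exact Submodule.zero_mem _
      have hbot : Submodule.span ℂ ({w} : Set (Fin 2 → ℂ)) ≠ ⊥ := by
        simpa [Submodule.span_singleton_eq_bot] using hw0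
      have := hss (Submodule.span ℂ {w}) ⊥ (by simp [hbot]) (by simp [bot_ne_top]) hmap
      rw [finrank_span_singleton hw0] at this
      simp at this
  · intro h V₁ V₂ h1 h2 hmap
    by_contra hle
    push_neg at hle
    have hV1ne : V₁ ≠ ⊥ := by
      intro hb
      rw [hb, finrank_bot] at hle
      omega
    obtain ⟨v, hvV, hv0⟩ := Submodule.exists_mem_ne_zero_of_ne_bot hV1ne
    rcases Nat.eq_zero_or_pos (finrank ℂ V₂) with h0 | hpos
    · have hV2 : V₂ = ⊥ := Submodule.finrank_eq_zero.mp h0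
      obtain ⟨S, hS⟩ := exists_SL2_column v hv0
      refine h ⟨1, S, Or.inr ⟨0, fun x i => ?_⟩⟩
      have key : (M x * (S : Matrix (Fin 2) (Fin 2) ℂ)) *ᵥ Pi.single 0 1 = 0 := by
        rw [← Matrix.mulVec_mulVec, hS]
        have := hmap x v hvV
        rw [hV2] at this
        simpa using this
      have := congrFun key i
      simpa [Matrix.SpecialLinearGroup.coe_one, Matrix.one_mul, Matrix.mulVec_single]
        using this
    · have hV1le : finrank ℂ V₁ ≤ 2 :=
        le_trans (Submodule.finrank_le V₁) (le_of_eq hfr2)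
      have hV2eq : finrank ℂ V₂ = 1 := by omega
      have hV1top : V₁ = ⊤ := Submodule.eq_top_of_finrank_eq (by omega)
      have hV2nb : V₂ ≠ ⊥ := by
        intro hb; rw [hb, finrank_bot] at hV2eq; omega
      obtain ⟨u, huV, hu0⟩ := Submodule.exists_mem_ne_zero_of_ne_bot hV2nb
      have hspan : Submodule.span ℂ ({u} : Set (Fin 2 → ℂ)) = V₂ :=
        Submodule.eq_of_le_of_finrank_eq
          ((Submodule.span_singleton_le_iff_mem u V₂).mpr huV)
          (by rw [finrank_span_singleton hu0, hV2eq])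
      obtain ⟨S, hS⟩ := exists_SL2_column u hu0
      refine h ⟨S⁻¹, 1, Or.inl ⟨1, fun x j => ?_⟩⟩
      have hm : (M x) *ᵥ Pi.single j 1 ∈ V₂ := hmap x _ (hV1top ▸ Submodule.mem_top)
      rw [← hspan] at hm
      obtain ⟨c, hc⟩ := Submodule.mem_span_singleton.mp hm
      have key : ((S⁻¹ : Matrix.SpecialLinearGroup (Fin 2) ℂ) : Matrix (Fin 2) (Fin 2) ℂ)
          *ᵥ ((M x) *ᵥ Pi.single j 1) = c • (Pi.single 0 1 : Fin 2 → ℂ) := by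
        rw [← hc, Matrix.mulVec_smul]
        congr 1
        rw [← hS, Matrix.mulVec_mulVec, sl2_inv_mul, Matrix.one_mulVec]
      have := congrFun key 1
      simp only [Matrix.mulVec_mulVec] at this
      simpa [Matrix.SpecialLinearGroup.coe_one, Matrix.mul_one, Matrix.mulVec_single,
        Pi.smul_apply, Pi.single_apply] using this
end

section
/- A nonzero Kronecker module M of type (2,2) on V is stable if and only if there do not exist A, B ∈ SL₂(ℂ) and indices i, j ∈ {1,2} such that the (i,j)-entry of A·M(x)·B vanishes for all x ∈ V; equivalently, M is stable if and only if no matrix SL₂(ℂ)×SL₂(ℂ)-equivalent to M has a zero entry. -/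
/-- Drezet's stability for Kronecker modules of type (2,2): for every pair of
subspaces `V₁, V₂ ⊆ ℂ²` with `(V₁,V₂) ≠ (0,0)`, `(V₁,V₂) ≠ (ℂ²,ℂ²)` and
`M(x)(V₁) ⊆ V₂` for all `x`, one has `dim V₂ > dim V₁`. -/
def KroneckerStable {V : Type*} [AddCommGroup V] [Module ℂ V]
    (M : V →ₗ[ℂ] Matrix (Fin 2) (Fin 2) ℂ) : Prop :=
  ∀ V₁ V₂ : Submodule ℂ (Fin 2 → ℂ),
    ¬(V₁ = ⊥ ∧ V₂ = ⊥) → ¬(V₁ = ⊤ ∧ V₂ = ⊤) →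
    (∀ (x : V), ∀ w ∈ V₁, (M x).mulVec w ∈ V₂) →
    Module.finrank ℂ V₁ < Module.finrank ℂ V₂

open Matrix

/-- There is an `SL₂` matrix with prescribed nonzero first column. -/
lemma exists_SL2_col (v : Fin 2 → ℂ) (hv : v ≠ 0) :
    ∃ B : Matrix.SpecialLinearGroup (Fin 2) ℂ,
      (B : Matrix (Fin 2) (Fin 2) ℂ) *ᵥ Pi.single 0 1 = v := by
  by_cases h0 : v 0 = 0
  · have h1 : v 1 ≠ 0 := by
      intro h1
      apply hv; funext k; fin_cases k <;> simp [h0, h1]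
    refine ⟨⟨!![v 0, -(v 1)⁻¹; v 1, 0], ?_⟩, ?_⟩
    · simp [Matrix.det_fin_two_of, h0, inv_mul_cancel₀ h1]
    · funext k; fin_cases k <;> simp
  · refine ⟨⟨!![v 0, 0; v 1, (v 0)⁻¹], ?_⟩, ?_⟩
    · simp [Matrix.det_fin_two_of, mul_inv_cancel₀ h0]
    · funext k; fin_cases k <;> simp

/-- There is an `SL₂` matrix whose first row kills a given nonzero vector. -/
lemma exists_SL2_row (w : Fin 2 → ℂ) (hw : w ≠ 0) :
    ∃ A : Matrix.SpecialLinearGroup (Fin 2) ℂ,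
      ((A : Matrix (Fin 2) (Fin 2) ℂ) *ᵥ w) 0 = 0 := by
  by_cases h0 : w 0 = 0
  · have h1 : w 1 ≠ 0 := by
      intro h1
      apply hw; funext k; fin_cases k <;> simp [h0, h1]
    refine ⟨⟨!![w 1, -(w 0); 0, (w 1)⁻¹], ?_⟩, ?_⟩
    · simp [Matrix.det_fin_two_of, h0, mul_inv_cancel₀ h1]
    · simp [Matrix.mulVec, dotProduct, Fin.sum_univ_two, Matrix.vecHead, Matrix.vecTail]; ring
  · refine ⟨⟨!![w 1, -(w 0); (w 0)⁻¹, 0], ?_⟩, ?_⟩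
    · rw [Matrix.det_fin_two_of]; field_simp; ring
    · simp [Matrix.mulVec, dotProduct, Fin.sum_univ_two, Matrix.vecHead, Matrix.vecTail]; ring

/-- A submodule of `ℂ²` of rank at most one lies in the span of one nonzero
vector. -/
lemma le_span_of_finrank_le_one (W : Submodule ℂ (Fin 2 → ℂ))
    (h : Module.finrank ℂ W ≤ 1) :
    ∃ w : Fin 2 → ℂ, w ≠ 0 ∧ W ≤ Submodule.span ℂ {w} := by
  rcases Nat.le_one_iff_eq_zero_or_eq_one.mp h with h0 | h1
  · refine ⟨(Pi.single 0 1 : Fin 2 → ℂ), ?_, ?_⟩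
    · intro h; exact (one_ne_zero : (1:ℂ) ≠ 0) (by simpa using congrFun h 0)
    · rw [Submodule.finrank_eq_zero.mp h0]; exact bot_le
  · have hWne : W ≠ ⊥ := by
      intro h; rw [h] at h1; simp at h1
    obtain ⟨w, hwW, hw⟩ := Submodule.exists_mem_ne_zero_of_ne_bot hWne
    have hle : Submodule.span ℂ {w} ≤ W := by
      rwa [Submodule.span_singleton_le_iff_mem]
    have heq : Submodule.span ℂ {w} = W :=
      Submodule.eq_of_le_of_finrank_eq hle
        (by rw [finrank_span_singleton hw, h1])
    exact ⟨w, hw, heq.ge⟩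

/-- A vector in `ℂ²` vanishing at `i` is a multiple of the other basis vector. -/
lemma fin2_single (u : Fin 2 → ℂ) (i : Fin 2) (h : u i = 0) :
    u = u (1 - i) • (Pi.single (1 - i) 1 : Fin 2 → ℂ) := by
  funext k
  fin_cases i <;> fin_cases k <;> simp_all [Pi.single_apply]

/-- A nonzero Kronecker module of type (2,2) is stable iff no matrix of linear
forms `SL₂×SL₂`-equivalent to it has a zero entry. -/
theorem kronecker_stable_iff {V : Type*} [AddCommGroup V] [Module ℂ V]
    [FiniteDimensional ℂ V]
    (M : V →ₗ[ℂ] Matrix (Fin 2) (Fin 2) ℂ) (hM : M ≠ 0) :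
    KroneckerStable M ↔
      ¬ ∃ (A B : Matrix.SpecialLinearGroup (Fin 2) ℂ) (i j : Fin 2),
        ∀ x : V,
          ((A : Matrix (Fin 2) (Fin 2) ℂ) * M x * (B : Matrix (Fin 2) (Fin 2) ℂ)) i j = 0 := by
  constructor
  · rintro hstab ⟨A, B, i, j, hz⟩
    have hBinv : ((B⁻¹ : Matrix.SpecialLinearGroup (Fin 2) ℂ) : Matrix (Fin 2) (Fin 2) ℂ)
        * (B : Matrix (Fin 2) (Fin 2) ℂ) = 1 := by
      rw [← Matrix.SpecialLinearGroup.coe_mul, inv_mul_cancel,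
        Matrix.SpecialLinearGroup.coe_one]
    have hAinv : ((A⁻¹ : Matrix.SpecialLinearGroup (Fin 2) ℂ) : Matrix (Fin 2) (Fin 2) ℂ)
        * (A : Matrix (Fin 2) (Fin 2) ℂ) = 1 := by
      rw [← Matrix.SpecialLinearGroup.coe_mul, inv_mul_cancel,
        Matrix.SpecialLinearGroup.coe_one]
    set v : Fin 2 → ℂ := (B : Matrix (Fin 2) (Fin 2) ℂ) *ᵥ Pi.single j 1 with hv
    set i' : Fin 2 := 1 - i with hi'
    set w : Fin 2 → ℂ :=
      ((A⁻¹ : Matrix.SpecialLinearGroup (Fin 2) ℂ) : Matrix (Fin 2) (Fin 2) ℂ)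
        *ᵥ Pi.single i' 1 with hw
    have hvne : v ≠ 0 := by
      intro h
      have h1 : ((B⁻¹ : Matrix.SpecialLinearGroup (Fin 2) ℂ) : Matrix (Fin 2) (Fin 2) ℂ)
          *ᵥ v = (Pi.single j 1 : Fin 2 → ℂ) := by
        rw [hv, Matrix.mulVec_mulVec, hBinv, Matrix.one_mulVec]
      rw [h, Matrix.mulVec_zero] at h1
      exact (one_ne_zero : (1:ℂ) ≠ 0) (by simpa using (congrFun h1 j).symm)
    have hwne : w ≠ 0 := by
      intro h
      have h1 : (A : Matrix (Fin 2) (Fin 2) ℂ) *ᵥ w = (Pi.single i' 1 : Fin 2 → ℂ) := by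
        rw [hw, Matrix.mulVec_mulVec, ← Matrix.SpecialLinearGroup.coe_mul,
          mul_inv_cancel, Matrix.SpecialLinearGroup.coe_one, Matrix.one_mulVec]
      rw [h, Matrix.mulVec_zero] at h1
      exact (one_ne_zero : (1:ℂ) ≠ 0) (by simpa using (congrFun h1 i').symm)
    have hkey : ∀ x : V, (M x) *ᵥ v ∈ Submodule.span ℂ {w} := by
      intro x
      set u : Fin 2 → ℂ :=
        ((A : Matrix (Fin 2) (Fin 2) ℂ) * M x * (B : Matrix (Fin 2) (Fin 2) ℂ))
          *ᵥ Pi.single j 1 with hu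
      have hui : u i = 0 := by
        rw [hu, Matrix.mulVec_single]
        simpa using hz x
      have hMv : ((A⁻¹ : Matrix.SpecialLinearGroup (Fin 2) ℂ) : Matrix (Fin 2) (Fin 2) ℂ)
          *ᵥ u = (M x) *ᵥ v := by
        rw [hu, hv, Matrix.mulVec_mulVec, Matrix.mulVec_mulVec, ← mul_assoc,
          ← mul_assoc, hAinv, one_mul]
      rw [← hMv, fin2_single u i hui, Matrix.mulVec_smul]
      exact Submodule.smul_mem (Submodule.span ℂ {w}) _ (Submodule.mem_span_singleton_self w)
    have h1 : ¬(Submodule.span ℂ {v} = ⊥ ∧ Submodule.span ℂ {w} = ⊥) := by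
      rintro ⟨h, -⟩
      exact hvne (Submodule.span_singleton_eq_bot.mp h)
    have h2 : ¬(Submodule.span ℂ {v} = ⊤ ∧ Submodule.span ℂ {w} = ⊤) := by
      rintro ⟨-, h⟩
      have : Module.finrank ℂ (Submodule.span ℂ {w}) = 1 :=
        finrank_span_singleton hwne
      rw [h, finrank_top ℂ (Fin 2 → ℂ)] at this
      simp [Module.finrank_fin_fun] at this
    have hlt := hstab (Submodule.span ℂ {v}) (Submodule.span ℂ {w}) h1 h2 ?_
    · rw [finrank_span_singleton hvne, finrank_span_singleton hwne] at hlt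
      exact lt_irrefl 1 hlt
    · intro x z hz'
      obtain ⟨c, rfl⟩ := Submodule.mem_span_singleton.mp hz'
      rw [Matrix.mulVec_smul]
      exact Submodule.smul_mem _ _ (hkey x)
  · intro hno V₁ V₂ h1 h2 hinv
    by_contra hlt
    push_neg at hlt
    apply hno
    have hV1 : V₁ ≠ ⊥ := by
      intro h
      apply h1
      refine ⟨h, ?_⟩
      rw [h, finrank_bot] at hlt
      exact Submodule.finrank_eq_zero.mp (Nat.le_zero.mp hlt)
    have hr2 : Module.finrank ℂ V₂ ≤ 1 := by
      by_contra h
      push_neg at h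
      have hle2 : Module.finrank ℂ V₂ ≤ 2 := by
        have := Submodule.finrank_le V₂
        rwa [Module.finrank_fin_fun] at this
      have hle1 : Module.finrank ℂ V₁ ≤ 2 := by
        have := Submodule.finrank_le V₁
        rwa [Module.finrank_fin_fun] at this
      have hV2 : V₂ = ⊤ := Submodule.eq_top_of_finrank_eq
        (by rw [Module.finrank_fin_fun]; omega)
      have hV1top : V₁ = ⊤ := Submodule.eq_top_of_finrank_eq
        (by rw [Module.finrank_fin_fun]; omega)
      exact h2 ⟨hV1top, hV2⟩
    obtain ⟨w, hw, hWle⟩ := le_span_of_finrank_le_one V₂ hr2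
    obtain ⟨A, hA⟩ := exists_SL2_row w hw
    obtain ⟨v, hvV, hv⟩ := Submodule.exists_mem_ne_zero_of_ne_bot hV1
    obtain ⟨B, hB⟩ := exists_SL2_col v hv
    refine ⟨A, B, 0, 0, fun x => ?_⟩
    obtain ⟨c, hc⟩ := Submodule.mem_span_singleton.mp (hWle (hinv x v hvV))
    have : ((A : Matrix (Fin 2) (Fin 2) ℂ) * M x * (B : Matrix (Fin 2) (Fin 2) ℂ))
        *ᵥ Pi.single 0 1 = c • ((A : Matrix (Fin 2) (Fin 2) ℂ) *ᵥ w) := by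
      rw [← Matrix.mulVec_mulVec, ← Matrix.mulVec_mulVec, hB, ← hc,
        Matrix.mulVec_smul]
    have h00 := congrFun this 0
    rw [Matrix.mulVec_single] at h00
    have hc0 : (c • ((A : Matrix (Fin 2) (Fin 2) ℂ) *ᵥ w)) 0 = 0 := by
      rw [Pi.smul_apply, hA, smul_zero]
    simpa using h00.trans hc0
end

section
/- Let g, h ∈ V* be linearly independent linear functionals and let M be the diagonal Kronecker module M(x) = diag(g(x), h(x)). Then for (A,B) ∈ SL₂(ℂ)×SL₂(ℂ), there exists a nonzero λ ∈ ℂ with A·M(x)·B⁻¹ = λ·M(x) for all x ∈ V if and only if there exist t ∈ ℂ* and ε ∈ {1, −1} such that A = diag(t, t⁻¹) and B = ε·diag(t, t⁻¹). In particular, the stabilizer of the projective class of M in SL₂(ℂ)×SL₂(ℂ) equals {(diag(t,t⁻¹), ε·diag(t,t⁻¹)) : t ∈ ℂ*, ε = ±1}. -/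
open Matrix

lemma surj_aux {V : Type*} [AddCommGroup V] [Module ℂ V]
    (g h : V →ₗ[ℂ] ℂ) (hgh : LinearIndependent ℂ ![g, h]) :
    Function.Surjective (g.prod h) := by
  rw [← LinearMap.range_eq_top]
  by_contra hne
  obtain ⟨f, hf0, hf⟩ := Submodule.exists_dual_map_eq_bot_of_lt_top
    (lt_top_iff_ne_top.mpr hne) inferInstance
  have hker : ∀ x : V, f (g x, h x) = 0 := by
    intro x
    have : f ((g.prod h) x) ∈ (LinearMap.range (g.prod h)).map f :=
      Submodule.mem_map_of_mem (LinearMap.mem_range_self _ x)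
    rw [hf] at this
    simpa using this
  have hcomb : f (1, 0) • g + f (0, 1) • h = 0 := by
    ext x
    have := hker x
    have hx : (g x, h x) = g x • ((1:ℂ), (0:ℂ)) + h x • ((0:ℂ), (1:ℂ)) := by
      simp
    rw [hx, map_add, _root_.map_smul, _root_.map_smul] at this
    simp only [LinearMap.add_apply, LinearMap.smul_apply, LinearMap.zero_apply, smul_eq_mul]
    simp only [smul_eq_mul] at this
    linear_combination this
  have := Fintype.linearIndependent_iff.mp hgh ![f (1,0), f (0,1)] ?_
  · apply hf0
    apply LinearMap.ext
    rintro ⟨u, v⟩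
    have hx : ((u:ℂ), (v:ℂ)) = u • ((1:ℂ), (0:ℂ)) + v • ((0:ℂ), (1:ℂ)) := by simp
    have h0 := this 0
    have h1 := this 1
    simp only [Matrix.cons_val_zero, Matrix.cons_val_one, Matrix.head_cons] at h0 h1
    rw [hx, map_add, _root_.map_smul, _root_.map_smul, h0, h1]
    simp
  · rw [Fin.sum_univ_two]
    simpa using hcomb


/-- The stabilizer of the projective class of the diagonal Kronecker module
`M(x) = diag(g(x), h(x))` with `g, h` linearly independent, under the
`SL₂(ℂ)×SL₂(ℂ)`-action `(A,B)·M = A M B⁻¹`, consists exactly of the pairs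
`(diag(t,t⁻¹), ε·diag(t,t⁻¹))` with `t ∈ ℂ*` and `ε = ±1`. -/
theorem stabilizer_diagonal_kronecker_module
    {V : Type*} [AddCommGroup V] [Module ℂ V] [FiniteDimensional ℂ V]
    (g h : V →ₗ[ℂ] ℂ) (hgh : LinearIndependent ℂ ![g, h])
    (M : V →ₗ[ℂ] Matrix (Fin 2) (Fin 2) ℂ)
    (hM : ∀ x : V, M x = !![g x, 0; 0, h x])
    (A B : Matrix.SpecialLinearGroup (Fin 2) ℂ) :
    (∃ c : ℂ, c ≠ 0 ∧ ∀ x : V,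
        (A : Matrix (Fin 2) (Fin 2) ℂ) * M x *
          ((B⁻¹ : Matrix.SpecialLinearGroup (Fin 2) ℂ) : Matrix (Fin 2) (Fin 2) ℂ)
        = c • M x) ↔
      (∃ (t : ℂ) (ε : ℂ), t ≠ 0 ∧ (ε = 1 ∨ ε = -1) ∧
        (A : Matrix (Fin 2) (Fin 2) ℂ) = !![t, 0; 0, t⁻¹] ∧
        (B : Matrix (Fin 2) (Fin 2) ℂ) = ε • !![t, 0; 0, t⁻¹]) := by
  have hBinv : ((B⁻¹ : Matrix.SpecialLinearGroup (Fin 2) ℂ) : Matrix (Fin 2) (Fin 2) ℂ)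
      = !![(B : Matrix (Fin 2) (Fin 2) ℂ) 1 1, -(B : Matrix (Fin 2) (Fin 2) ℂ) 0 1;
          -(B : Matrix (Fin 2) (Fin 2) ℂ) 1 0, (B : Matrix (Fin 2) (Fin 2) ℂ) 0 0] := by
    rw [Matrix.SpecialLinearGroup.coe_inv, Matrix.adjugate_fin_two]
  have hdetA : (A : Matrix (Fin 2) (Fin 2) ℂ) 0 0 * (A : Matrix (Fin 2) (Fin 2) ℂ) 1 1
      - (A : Matrix (Fin 2) (Fin 2) ℂ) 0 1 * (A : Matrix (Fin 2) (Fin 2) ℂ) 1 0 = 1 := by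
    have := A.2; rwa [Matrix.det_fin_two] at this
  have hdetB : (B : Matrix (Fin 2) (Fin 2) ℂ) 0 0 * (B : Matrix (Fin 2) (Fin 2) ℂ) 1 1
      - (B : Matrix (Fin 2) (Fin 2) ℂ) 0 1 * (B : Matrix (Fin 2) (Fin 2) ℂ) 1 0 = 1 := by
    have := B.2; rwa [Matrix.det_fin_two] at this
  set a := (A : Matrix (Fin 2) (Fin 2) ℂ) 0 0 with ha
  set b := (A : Matrix (Fin 2) (Fin 2) ℂ) 0 1 with hb
  set a' := (A : Matrix (Fin 2) (Fin 2) ℂ) 1 0 with ha'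
  set d := (A : Matrix (Fin 2) (Fin 2) ℂ) 1 1 with hd
  set p := (B : Matrix (Fin 2) (Fin 2) ℂ) 0 0 with hp
  set q := (B : Matrix (Fin 2) (Fin 2) ℂ) 0 1 with hq
  set r := (B : Matrix (Fin 2) (Fin 2) ℂ) 1 0 with hr
  set s := (B : Matrix (Fin 2) (Fin 2) ℂ) 1 1 with hs
  constructor
  · rintro ⟨c, hc, hE⟩
    obtain ⟨x₁, hx₁⟩ := surj_aux g h hgh (1, 0)
    obtain ⟨x₂, hx₂⟩ := surj_aux g h hgh (0, 1)
    have hg1 : g x₁ = 1 := congrArg Prod.fst hx₁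
    have hh1 : h x₁ = 0 := congrArg Prod.snd hx₁
    have hg2 : g x₂ = 0 := congrArg Prod.fst hx₂
    have hh2 : h x₂ = 1 := congrArg Prod.snd hx₂
    have e1 := hE x₁
    have e2 := hE x₂
    rw [hM x₁, hBinv, hg1, hh1] at e1
    rw [hM x₂, hBinv, hg2, hh2] at e2
    have f00 := congrFun (congrFun e1 0) 0
    have f01 := congrFun (congrFun e1 0) 1
    have f10 := congrFun (congrFun e1 1) 0
    have f11 := congrFun (congrFun e1 1) 1
    have g00 := congrFun (congrFun e2 0) 0
    have g01 := congrFun (congrFun e2 0) 1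
    have g10 := congrFun (congrFun e2 1) 0
    have g11 := congrFun (congrFun e2 1) 1
    simp [Matrix.mul_apply, Fin.sum_univ_two, ← ha, ← hb, ← ha', ← hd]
      at f00 f01 f10 f11 g00 g01 g10 g11
    have hane : a ≠ 0 := fun h0 => hc (by rw [← f00, h0, zero_mul])
    have hsne : s ≠ 0 := fun h0 => hc (by rw [← f00, h0, mul_zero])
    have hdne : d ≠ 0 := fun h0 => hc (by rw [← g11, h0, zero_mul])
    have hpne : p ≠ 0 := fun h0 => hc (by rw [← g11, h0, mul_zero])
    have hq0 : q = 0 := f01.resolve_left hane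
    have ha'0 : a' = 0 := f10.resolve_right hsne
    have hb0 : b = 0 := g01.resolve_right hpne
    have hr0 : r = 0 := g10.resolve_left hdne
    rw [hb0, ha'0] at hdetA
    rw [hq0, hr0] at hdetB
    have had : a * d = 1 := by linear_combination hdetA
    have hps : p * s = 1 := by linear_combination hdetB
    have hc2 : c * c = 1 := by
      calc c * c = (a * s) * (d * p) := by rw [f00, g11]
        _ = (a * d) * (p * s) := by ring
        _ = 1 := by rw [had, hps, one_mul]
    refine ⟨a, c, hane, mul_self_eq_one_iff.mp hc2, ?_, ?_⟩
    · have hd' : d = a⁻¹ := by field_simp; linear_combination had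
      rw [Matrix.eta_fin_two (A : Matrix (Fin 2) (Fin 2) ℂ), ← ha, ← hb, ← ha', ← hd,
        hb0, ha'0, hd']
    · have hp' : p = c * a := by
        have : p * (a * d) = p := by rw [had, mul_one]
        linear_combination this.symm + a * g11
      have hs' : s = c * a⁻¹ := by field_simp; linear_combination f00
      rw [Matrix.eta_fin_two (B : Matrix (Fin 2) (Fin 2) ℂ), ← hp, ← hq, ← hr, ← hs,
        hq0, hr0, hp', hs', Matrix.smul_of]
      congr 1
      simp [Matrix.smul_cons, smul_eq_mul]
  · rintro ⟨t, ε, ht, hε, hA, hB⟩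
    have hε2 : ε ≠ 0 := by rcases hε with hε | hε <;> simp [hε]
    refine ⟨ε, hε2, fun x => ?_⟩
    rw [hM x, hBinv, hA]
    have hp' : p = ε * t := by rw [hp, hB]; simp
    have hq' : q = 0 := by rw [hq, hB]; simp
    have hr' : r = 0 := by rw [hr, hB]; simp
    have hs' : s = ε * t⁻¹ := by rw [hs, hB]; simp
    rw [hp', hq', hr', hs']
    ext i j
    fin_cases i <;> fin_cases j <;>
      simp [Matrix.mul_apply, Fin.sum_univ_two, Matrix.smul_apply, smul_eq_mul] <;>
      field_simp <;> ring
end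

section
/- Let v, v' ∈ V be nonzero vectors and let W, W' ⊆ V be linear subspaces with dim W = dim W' = 4, v ∈ W and v' ∈ W'. If v ∧ W = v' ∧ W' as subspaces of Λ²V, then v' is a nonzero scalar multiple of v and W = W'. -/
open ExteriorAlgebra

/-- The wedge of a linearly independent family is nonzero. -/
lemma ιMulti_ne_zero_aux {V : Type*} [AddCommGroup V] [Module ℂ V]
    {n : ℕ} {f : Fin n → V} (hf : LinearIndependent ℂ f) :
    ExteriorAlgebra.ιMulti ℂ n f ≠ 0 := by
  obtain ⟨q, hq⟩ := Submodule.exists_isCompl (Submodule.span ℂ (Set.range f))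
  let proj := Submodule.linearProjOfIsCompl _ q hq
  let p : V →ₗ[ℂ] (Fin n → ℂ) :=
    (Finsupp.linearEquivFunOnFinite ℂ ℂ (Fin n)).toLinearMap ∘ₗ hf.repr ∘ₗ proj
  have hp : ∀ i, p (f i) = Pi.single i 1 := by
    intro i
    have hmem : f i ∈ Submodule.span ℂ (Set.range f) :=
      Submodule.subset_span (Set.mem_range_self i)
    have h1 : proj (f i) = ⟨f i, hmem⟩ :=
      Submodule.linearProjOfIsCompl_apply_left hq ⟨f i, hmem⟩
    have h2 : hf.repr ⟨f i, hmem⟩ = Finsupp.single i 1 :=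
      hf.repr_eq_single i _ rfl
    simp only [p, LinearMap.comp_apply, h1, h2]
    ext j
    simp [Finsupp.single_apply, Pi.single_apply, eq_comm]
  let d : V [⋀^Fin n]→ₗ[ℂ] ℂ := (Pi.basisFun ℂ (Fin n)).det.compLinearMap p
  have hd : d f = 1 := by
    have hpf : (fun i => p (f i)) = ⇑(Pi.basisFun ℂ (Fin n)) := by
      ext i j
      rw [hp i]
      simp [Pi.basisFun_apply]
    show (Pi.basisFun ℂ (Fin n)).det (fun i => p (f i)) = 1
    rw [hpf, Module.Basis.det_self]
  intro h0
  have := ExteriorAlgebra.liftAlternating_apply_ιMulti (Pi.single n d) f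
  rw [h0, map_zero, Pi.single_eq_same, hd] at this
  exact one_ne_zero this.symm

lemma mem_span_of_wedge2 {V : Type*} [AddCommGroup V] [Module ℂ V]
    {v w : V} (hv : v ≠ 0)
    (h : ExteriorAlgebra.ι ℂ v * ExteriorAlgebra.ι ℂ w = 0) :
    w ∈ Submodule.span ℂ {v} := by
  by_contra hw
  have hr : Set.range ![v] = {v} := by
    simp [Set.range_subset_iff]
  have h1 : LinearIndependent ℂ ![v] := by
    apply linearIndependent_unique_iff.2
    simpa using hv
  have hsp : w ∉ Submodule.span ℂ (Set.range ![v]) := by rwa [hr]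
  have h2 : LinearIndependent ℂ (Fin.snoc ![v] w : Fin 2 → V) :=
    linearIndependent_fin_snoc.2 ⟨h1, hsp⟩
  have heqf : (Fin.snoc ![v] w : Fin 2 → V) = ![v, w] := by
    ext i; fin_cases i <;> rfl
  rw [heqf] at h2
  apply ιMulti_ne_zero_aux h2
  rw [ExteriorAlgebra.ιMulti_apply]
  simp [List.ofFn_succ, h]

lemma mem_span_of_wedge3 {V : Type*} [AddCommGroup V] [Module ℂ V]
    {v v' w : V} (hind : LinearIndependent ℂ ![v, v'])
    (h : ExteriorAlgebra.ι ℂ v * (ExteriorAlgebra.ι ℂ v' * ExteriorAlgebra.ι ℂ w) = 0) :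
    w ∈ Submodule.span ℂ {v, v'} := by
  by_contra hw
  have hr : Set.range ![v, v'] = {v, v'} := by
    simp [Matrix.range_cons, Matrix.range_empty, Set.pair_comm]
  have hsp : w ∉ Submodule.span ℂ (Set.range ![v, v']) := by rwa [hr]
  have h2 : LinearIndependent ℂ (Fin.snoc ![v, v'] w : Fin 3 → V) :=
    linearIndependent_fin_snoc.2 ⟨hind, hsp⟩
  have heqf : (Fin.snoc ![v, v'] w : Fin 3 → V) = ![v, v', w] := by
    ext i; fin_cases i <;> rfl
  rw [heqf] at h2
  apply ιMulti_ne_zero_aux h2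
  rw [ExteriorAlgebra.ιMulti_apply]
  simp [List.ofFn_succ, mul_assoc, h]

/-- If `v, v'` are nonzero vectors of a finite-dimensional complex vector space `V`,
`W, W'` are 4-dimensional subspaces with `v ∈ W`, `v' ∈ W'`, and the subspaces
`v ∧ W = {v ∧ w : w ∈ W}` and `v' ∧ W'` of `Λ²V` coincide, then `v'` is a nonzero
scalar multiple of `v` and `W = W'`. -/
theorem wedge_determines_line_and_space
    {V : Type*} [AddCommGroup V] [Module ℂ V] [FiniteDimensional ℂ V]
    (v v' : V) (hv : v ≠ 0) (hv' : v' ≠ 0)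
    (W W' : Submodule ℂ V)
    (hW : Module.finrank ℂ W = 4) (hW' : Module.finrank ℂ W' = 4)
    (hvW : v ∈ W) (hv'W' : v' ∈ W')
    (heq : W.map ((LinearMap.mulLeft ℂ (ExteriorAlgebra.ι ℂ v)) ∘ₗ (ExteriorAlgebra.ι ℂ))
         = W'.map ((LinearMap.mulLeft ℂ (ExteriorAlgebra.ι ℂ v')) ∘ₗ (ExteriorAlgebra.ι ℂ))) :
    (∃ c : ℂ, c ≠ 0 ∧ v' = c • v) ∧ W = W' := by
  -- unpack the membership conditions of the two maps
  have hmem : ∀ w' ∈ W', ∃ w ∈ W,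
      ExteriorAlgebra.ι ℂ v * ExteriorAlgebra.ι ℂ w
        = ExteriorAlgebra.ι ℂ v' * ExteriorAlgebra.ι ℂ w' := by
    intro w' hw'
    have : ExteriorAlgebra.ι ℂ v' * ExteriorAlgebra.ι ℂ w'
        ∈ W.map ((LinearMap.mulLeft ℂ (ExteriorAlgebra.ι ℂ v)) ∘ₗ (ExteriorAlgebra.ι ℂ)) := by
      rw [heq]
      exact ⟨w', hw', rfl⟩
    obtain ⟨w, hw, hww⟩ := this
    exact ⟨w, hw, hww⟩
  have hmem' : ∀ w ∈ W, ∃ w' ∈ W',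
      ExteriorAlgebra.ι ℂ v' * ExteriorAlgebra.ι ℂ w'
        = ExteriorAlgebra.ι ℂ v * ExteriorAlgebra.ι ℂ w := by
    intro w hw
    have : ExteriorAlgebra.ι ℂ v * ExteriorAlgebra.ι ℂ w
        ∈ W'.map ((LinearMap.mulLeft ℂ (ExteriorAlgebra.ι ℂ v')) ∘ₗ (ExteriorAlgebra.ι ℂ)) := by
      rw [← heq]
      exact ⟨w, hw, rfl⟩
    obtain ⟨w', hw', hww⟩ := this
    exact ⟨w', hw', hww⟩
  -- first step: v' ∈ span {v}
  have hv'span : v' ∈ Submodule.span ℂ {v} := by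
    by_contra hns
    -- then ![v, v'] is linearly independent
    have h1 : LinearIndependent ℂ ![v] := by
      apply linearIndependent_unique_iff.2
      simpa using hv
    have hr : Set.range ![v] = {v} := by
      simp [Matrix.range_cons, Matrix.range_empty]
    have hsp : v' ∉ Submodule.span ℂ (Set.range ![v]) := by rwa [hr]
    have hind : LinearIndependent ℂ (Fin.snoc ![v] v' : Fin 2 → V) :=
      linearIndependent_fin_snoc.2 ⟨h1, hsp⟩
    have heqf : (Fin.snoc ![v] v' : Fin 2 → V) = ![v, v'] := by
      ext i; fin_cases i <;> rfl
    rw [heqf] at hind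
    -- every w' ∈ W' lies in span {v, v'}
    have hW'le : W' ≤ Submodule.span ℂ {v, v'} := by
      intro w' hw'
      obtain ⟨w, _, hww⟩ := hmem w' hw'
      apply mem_span_of_wedge3 hind
      rw [← hww, ← mul_assoc, ExteriorAlgebra.ι_sq_zero, zero_mul]
    -- contradiction with dimensions
    have hcard : Module.finrank ℂ (Submodule.span ℂ ({v, v'} : Set V)) ≤ 2 := by
      classical
      have := finrank_span_le_card (R := ℂ) ({v, v'} : Set V)
      refine this.trans ?_
      have : ({v, v'} : Set V).toFinset ⊆ {v, v'} := by
        intro x hx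
        simpa using (Set.mem_toFinset.1 hx)
      calc ({v, v'} : Set V).toFinset.card ≤ ({v, v'} : Finset V).card :=
            Finset.card_le_card this
        _ ≤ 2 := Finset.card_insert_le _ _ |>.trans (by simp)
    have h4 : (4 : ℕ) ≤ 2 := by
      rw [← hW']
      exact hcard.trans' (Submodule.finrank_mono hW'le)
    omega
  obtain ⟨c, hc⟩ := Submodule.mem_span_singleton.1 hv'span
  have hc0 : c ≠ 0 := by
    rintro rfl
    rw [zero_smul] at hc
    exact hv' hc.symm
  refine ⟨⟨c, hc0, hc.symm⟩, ?_⟩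
  -- second step: W = W'
  have hvW' : v ∈ W' := by
    have : c⁻¹ • v' ∈ W' := W'.smul_mem _ hv'W'
    rwa [← hc, smul_smul, inv_mul_cancel₀ hc0, one_smul] at this
  apply Submodule.eq_of_le_of_finrank_eq ?_ (by rw [hW, hW'])
  intro w hw
  obtain ⟨w', hw', hww⟩ := hmem' w hw
  have hz : ExteriorAlgebra.ι ℂ v * ExteriorAlgebra.ι ℂ (w - c • w') = 0 := by
    have hιv' : ExteriorAlgebra.ι ℂ v' = c • ExteriorAlgebra.ι ℂ v := by
      rw [← hc, map_smul]
    rw [map_sub, map_smul, mul_sub, mul_smul_comm]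
    rw [hιv', smul_mul_assoc] at hww
    rw [← hww, sub_self]
  have hspan := mem_span_of_wedge2 hv hz
  have hsub : w - c • w' ∈ W' := by
    refine Submodule.span_le.2 ?_ hspan
    simpa using hvW'
  have : (w - c • w') + c • w' ∈ W' := W'.add_mem hsub (W'.smul_mem _ hw')
  simpa using this
end

section
/- For every integer n ≥ 3, the rational function T(n) ∈ ℚ(q) is in fact a polynomial in q with integer coefficients. -/
open RatFunc

/-- The variable `q` of the field of rational functions `ℚ(q)`. -/
noncomputable def q : RatFunc ℚ := RatFunc.X

/-- Virtual Poincaré polynomial of the moduli space of degree-2 stable maps to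
`Gr(n-1, n+1)`. -/
noncomputable def A (n : ℕ) : RatFunc ℚ :=
  ((1 + q ^ (n + 1)) * (1 + q ^ 3) - q * (1 + q) * (q ^ 2 + q ^ (n - 1))) *
      ((1 - q ^ (n + 1)) * (1 - q ^ n) * (1 - q ^ (n - 1))) /
    ((1 - q) ^ 3 * (1 - q ^ 2) ^ 2)

/-- Virtual Poincaré polynomial of the moduli space of degree-2 stable maps to
`ℙ^{n-1}`. -/
noncomputable def B (n : ℕ) : RatFunc ℚ :=
  (1 - q ^ (n + 1)) * (1 - q ^ n) * (1 - q ^ (n - 1)) / ((1 - q) ^ 2 * (1 - q ^ 2))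

/-- Virtual Poincaré polynomial of the locus of rank-2 quadrics in
`ℙ(Sym²(ℂ^{n+1})*)`. -/
noncomputable def C (n : ℕ) : RatFunc ℚ :=
  (1 / 2) * (((1 - q ^ (n + 1)) / (1 - q)) ^ 2 + (1 - q ^ (2 * n + 2)) / (1 - q ^ 2)) -
    (1 - q ^ (n + 1)) / (1 - q)

/-- Virtual Poincaré polynomial of the double symmetroid `T₄` (equivalently, of the
Kronecker moduli space `ℙ((ℂ^{n+1})* ⊗ gl₂)//SL₂×SL₂`). -/
noncomputable def T (n : ℕ) : RatFunc ℚ :=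
  A n - (B n - 1) * ((1 - q ^ (n + 1)) / (1 - q)) -
    (((1 - q ^ (n - 1)) / (1 - q)) ^ 2 - 1) * C n

noncomputable abbrev φ := algebraMap (Polynomial ℚ) (RatFunc ℚ)

/-- geometric sum over ℤ -/
noncomputable def gZ (a : ℕ) : Polynomial ℤ := ∑ i ∈ Finset.range a, Polynomial.X ^ i

/-- geometric sum in `X^2` over ℤ -/
noncomputable def hZ (a : ℕ) : Polynomial ℤ := ∑ i ∈ Finset.range a, (Polynomial.X ^ 2) ^ i

/-- geometric sum in ℚ(q) -/
noncomputable def G (a : ℕ) : RatFunc ℚ := φ (∑ i ∈ Finset.range a, Polynomial.X ^ i)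

/-- geometric sum in `q^2` in ℚ(q) -/
noncomputable def H (a : ℕ) : RatFunc ℚ := φ (∑ i ∈ Finset.range a, (Polynomial.X ^ 2) ^ i)

lemma hq : q = φ Polynomial.X := by rw [q, RatFunc.algebraMap_X]

lemma h1 : (1 - q) ≠ 0 := by
  rw [hq, ← map_one φ, ← map_sub]
  apply RatFunc.algebraMap_ne_zero
  intro h
  have := congrArg (Polynomial.coeff · 1) h
  simp [Polynomial.coeff_one] at this

lemma h2 : (1 - q ^ 2) ≠ 0 := by
  rw [hq, ← map_one φ, ← map_pow, ← map_sub]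
  apply RatFunc.algebraMap_ne_zero
  intro h
  have := congrArg (Polynomial.coeff · 2) h
  simp [Polynomial.coeff_one] at this

lemma Gmul (a : ℕ) : (1 - q) * G a = 1 - q ^ a := by
  rw [G, hq, ← map_one φ, ← map_sub, ← map_mul, ← map_pow, ← map_sub]
  congr 1
  linear_combination -(geom_sum_mul (Polynomial.X : Polynomial ℚ) a)

lemma Hmul (a : ℕ) : (1 - q ^ 2) * H a = 1 - q ^ (2 * a) := by
  rw [H, hq, ← map_one φ, ← map_pow, ← map_sub, ← map_mul, ← map_pow, ← map_sub]
  congr 1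
  have := geom_sum_mul ((Polynomial.X : Polynomial ℚ) ^ 2) a
  rw [← pow_mul] at this
  linear_combination -this

lemma G_eq (a : ℕ) : G a = (1 - q ^ a) / (1 - q) := by
  rw [eq_div_iff h1, mul_comm, Gmul]

lemma H_eq (a : ℕ) : H a = (1 - q ^ (2 * a)) / (1 - q ^ 2) := by
  rw [eq_div_iff h2, mul_comm, Hmul]

lemma map_gZ (a : ℕ) : φ ((gZ a).map (Int.castRingHom ℚ)) = G a := by
  simp [gZ, G, Polynomial.map_sum]

lemma map_hZ (a : ℕ) : φ ((hZ a).map (Int.castRingHom ℚ)) = H a := by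
  simp [hZ, H, Polynomial.map_sum]

lemma two_ne_zero'' : (2 : RatFunc ℚ) ≠ 0 := by
  have h := RatFunc.algebraMap_ne_zero
    (show (2 : Polynomial ℚ) ≠ 0 by norm_num) (K := ℚ)
  rwa [map_ofNat] at h

lemma Gsucc (a : ℕ) : G (a + 1) = G a + q ^ a := by
  rw [G, G, Finset.sum_range_succ, map_add, map_pow, ← hq]

lemma Hsucc (a : ℕ) : H (a + 1) = H a + q ^ (2 * a) := by
  rw [H, H, Finset.sum_range_succ, map_add, map_pow, map_pow, ← hq, ← pow_mul]

lemma Gzero : G 0 = 0 := by simp [G]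

lemma Hzero : H 0 = 0 := by simp [H]

/-- the integer polynomial representing the rank-2 quadric locus count -/
noncomputable def CZ : ℕ → Polynomial ℤ
  | 0 => 0
  | (a + 1) => CZ a + Polynomial.X ^ a * (gZ a - 1) + Polynomial.X ^ (2 * a)

lemma Ckey (a : ℕ) : (1 / 2) * ((G a) ^ 2 + H a) - G a
    = φ ((CZ a).map (Int.castRingHom ℚ)) := by
  induction a with
  | zero => simp [CZ, Gzero, Hzero]
  | succ a ih =>
    rw [CZ, Gsucc, Hsucc]
    simp only [Polynomial.map_add, Polynomial.map_mul, Polynomial.map_sub, Polynomial.map_pow,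
      Polynomial.map_X, Polynomial.map_one, map_add, map_mul, map_sub, map_pow, map_one, map_gZ, ← hq,
      ← ih]
    have h2' : (2 : RatFunc ℚ) ≠ 0 := two_ne_zero''
    field_simp
    ring

lemma C_eq (n : ℕ) : C n = φ ((CZ (n + 1)).map (Int.castRingHom ℚ)) := by
  show (1 / 2) * (((1 - q ^ (n + 1)) / (1 - q)) ^ 2 + (1 - q ^ (2 * n + 2)) / (1 - q ^ 2)) -
      (1 - q ^ (n + 1)) / (1 - q) = _
  rw [← G_eq, show 2 * n + 2 = 2 * (n + 1) by ring, ← H_eq, ← Ckey]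

lemma B_even (j : ℕ) : B (2 * j + 4) = G (2 * j + 5) * H (j + 2) * G (2 * j + 3) := by
  have e1 : 2 * j + 4 - 1 = 2 * j + 3 := rfl
  rw [B, e1, G_eq, G_eq, H_eq]
  have h1' := h1; have h2' := h2
  field_simp
  ring

lemma B_odd (j : ℕ) : B (2 * j + 3) = H (j + 2) * G (2 * j + 3) * G (2 * j + 2) := by
  have e1 : 2 * j + 3 - 1 = 2 * j + 2 := rfl
  rw [B, e1, G_eq, G_eq, H_eq]
  have h1' := h1; have h2' := h2
  field_simp
  ring

lemma A_eq (n : ℕ) : A (n + 1) = (1 + q ^ 2) * G (n + 1) * B (n + 1) := by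
  have e1 : n + 1 - 1 = n := rfl
  rw [A, B, e1, G_eq]
  have h1' := h1; have h2' := h2
  field_simp
  ring

/-- For every `n ≥ 3`, the rational function `T(n) ∈ ℚ(q)` is a polynomial in `q`
with integer coefficients. -/
theorem T_is_integer_polynomial (n : ℕ) (hn : 3 ≤ n) :
    ∃ p : Polynomial ℤ,
      T n = algebraMap (Polynomial ℚ) (RatFunc ℚ) (p.map (Int.castRingHom ℚ)) := by
  rcases Nat.even_or_odd n with he | ho
  · obtain ⟨j, rfl⟩ : ∃ j, n = 2 * j + 4 := by
      obtain ⟨r, hr⟩ := he; exact ⟨(n - 4) / 2, by omega⟩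
    refine ⟨(1 + Polynomial.X ^ 2) * gZ (2 * j + 4) * (gZ (2 * j + 5) * hZ (j + 2) * gZ (2 * j + 3))
        - (gZ (2 * j + 5) * hZ (j + 2) * gZ (2 * j + 3) - 1) * gZ (2 * j + 5)
        - ((gZ (2 * j + 3)) ^ 2 - 1) * CZ (2 * j + 5), ?_⟩
    have e1 : 2 * j + 4 - 1 = 2 * j + 3 := rfl
    have e2 : 2 * j + 4 + 1 = 2 * j + 5 := rfl
    rw [T, e1, e2, show (2 * j + 4) = (2 * j + 3) + 1 from rfl, A_eq,
      show (2 * j + 3) + 1 = 2 * j + 4 from rfl, B_even, ← G_eq (2 * j + 5), ← G_eq (2 * j + 3), C_eq]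
    simp only [Polynomial.map_add, Polynomial.map_mul, Polynomial.map_sub, Polynomial.map_pow,
      Polynomial.map_X, Polynomial.map_one, map_add, map_mul, map_sub, map_pow, map_one,
      map_gZ, map_hZ, ← hq]
  · obtain ⟨j, rfl⟩ : ∃ j, n = 2 * j + 3 := by
      obtain ⟨r, hr⟩ := ho; exact ⟨(n - 3) / 2, by omega⟩
    refine ⟨(1 + Polynomial.X ^ 2) * gZ (2 * j + 3) * (hZ (j + 2) * gZ (2 * j + 3) * gZ (2 * j + 2))
        - (hZ (j + 2) * gZ (2 * j + 3) * gZ (2 * j + 2) - 1) * gZ (2 * j + 4)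
        - ((gZ (2 * j + 2)) ^ 2 - 1) * CZ (2 * j + 4), ?_⟩
    have e1 : 2 * j + 3 - 1 = 2 * j + 2 := rfl
    have e2 : 2 * j + 3 + 1 = 2 * j + 4 := rfl
    rw [T, e1, e2, show (2 * j + 3) = (2 * j + 2) + 1 from rfl, A_eq,
      show (2 * j + 2) + 1 = 2 * j + 3 from rfl, B_odd, ← G_eq (2 * j + 4), ← G_eq (2 * j + 2), C_eq]
    simp only [Polynomial.map_add, Polynomial.map_mul, Polynomial.map_sub, Polynomial.map_pow,
      Polynomial.map_X, Polynomial.map_one, map_add, map_mul, map_sub, map_pow, map_one,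
      map_gZ, map_hZ, ← hq]
end

section
/- In ℚ(q), the identity ((1−q¹⁵)/(1−q) − (1−q³)/(1−q)) + ((1−q³)/(1−q))²·((1−q¹³)/(1−q) − 1) + T(5) = q¹⁷ + 2q¹⁶ + 5q¹⁵ + 9q¹⁴ + 11q¹³ + 11q¹² + 10q¹¹ + 10q¹⁰ + 9q⁹ + 10q⁸ + 10q⁷ + 12q⁶ + 12q⁵ + 12q⁴ + 9q³ + 5q² + 2q + 1 holds; the right-hand side is the virtual Poincaré polynomial of the moduli space M_{ℙ²}(4m+2) of semistable one-dimensional sheaves on ℙ² with Hilbert polynomial 4m+2. -/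
open RatFunc

set_option maxHeartbeats 1000000 in
/-- The wall-crossing computation of the virtual Poincaré polynomial of the moduli
space `M_{ℙ²}(4m+2)`:
`(P(ℙ¹⁴) − P(ℙ²)) + P(ℙ²×ℙ²)(P(ℙ¹²) − 1) + P(T₄(5))` equals the stated polynomial. -/
theorem virtual_poincare_M_P2_4m_2 :
    ((1 - q ^ 15) / (1 - q) - (1 - q ^ 3) / (1 - q)) +
        ((1 - q ^ 3) / (1 - q)) ^ 2 * ((1 - q ^ 13) / (1 - q) - 1) + T 5 =
      q ^ 17 + 2 * q ^ 16 + 5 * q ^ 15 + 9 * q ^ 14 + 11 * q ^ 13 + 11 * q ^ 12 +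
        10 * q ^ 11 + 10 * q ^ 10 + 9 * q ^ 9 + 10 * q ^ 8 + 10 * q ^ 7 +
        12 * q ^ 6 + 12 * q ^ 5 + 12 * q ^ 4 + 9 * q ^ 3 + 5 * q ^ 2 + 2 * q + 1 := by
  have h1 : (1 : RatFunc ℚ) - q ≠ 0 := by
    have e : (1 : RatFunc ℚ) - q = algebraMap (Polynomial ℚ) _ (1 - Polynomial.X) := by
      rw [map_sub, map_one, RatFunc.algebraMap_X]; rfl
    rw [e]
    exact RatFunc.algebraMap_ne_zero (by intro h; simpa using congrArg (Polynomial.eval 0) h)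
  have h2 : (1 : RatFunc ℚ) - q ^ 2 ≠ 0 := by
    have e : (1 : RatFunc ℚ) - q ^ 2 = algebraMap (Polynomial ℚ) _ (1 - Polynomial.X ^ 2) := by
      rw [map_sub, map_one, map_pow, RatFunc.algebraMap_X]; rfl
    rw [e]
    exact RatFunc.algebraMap_ne_zero (by intro h; simpa using congrArg (Polynomial.eval 0) h)
  have h1' : ((1 : RatFunc ℚ) - q) ^ 3 * (1 - q ^ 2) ^ 2 ≠ 0 :=
    mul_ne_zero (pow_ne_zero _ h1) (pow_ne_zero _ h2)
  have h2' : ((1 : RatFunc ℚ) - q) ^ 2 * (1 - q ^ 2) ≠ 0 :=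
    mul_ne_zero (pow_ne_zero _ h1) h2
  have h3 : ((1 : RatFunc ℚ) - q ^ 3) / (1 - q) = 1 + q + q ^ 2 := by
    rw [div_eq_iff h1]; ring
  have h4 : ((1 : RatFunc ℚ) - q ^ 4) / (1 - q) = 1 + q + q ^ 2 + q ^ 3 := by
    rw [div_eq_iff h1]; ring
  have h6 : ((1 : RatFunc ℚ) - q ^ 6) / (1 - q) = 1 + q + q ^ 2 + q ^ 3 + q ^ 4 + q ^ 5 := by
    rw [div_eq_iff h1]; ring
  have h13 : ((1 : RatFunc ℚ) - q ^ 13) / (1 - q) =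
      1 + q + q ^ 2 + q ^ 3 + q ^ 4 + q ^ 5 + q ^ 6 + q ^ 7 + q ^ 8 + q ^ 9 + q ^ 10 +
        q ^ 11 + q ^ 12 := by
    rw [div_eq_iff h1]; ring
  have h15 : ((1 : RatFunc ℚ) - q ^ 15) / (1 - q) =
      1 + q + q ^ 2 + q ^ 3 + q ^ 4 + q ^ 5 + q ^ 6 + q ^ 7 + q ^ 8 + q ^ 9 + q ^ 10 +
        q ^ 11 + q ^ 12 + q ^ 13 + q ^ 14 := by
    rw [div_eq_iff h1]; ring
  have h12 : ((1 : RatFunc ℚ) - q ^ 12) / (1 - q ^ 2) =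
      1 + q ^ 2 + q ^ 4 + q ^ 6 + q ^ 8 + q ^ 10 := by
    rw [div_eq_iff h2]; ring
  have hA : A 5 = 1 + 3 * q + 8 * q ^ 2 + 16 * q ^ 3 + 28 * q ^ 4 + 42 * q ^ 5 + 57 * q ^ 6 + 69 * q ^ 7 + 76 * q ^ 8 + 76 * q ^ 9 + 69 * q ^ 10 + 57 * q ^ 11 + 42 * q ^ 12 + 28 * q ^ 13 + 16 * q ^ 14 + 8 * q ^ 15 + 3 * q ^ 16 + q ^ 17 := by
    rw [A]; norm_num; rw [div_eq_iff h1']; ring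
  have hB : B 5 = 1 + 2 * q + 4 * q ^ 2 + 6 * q ^ 3 + 8 * q ^ 4 + 9 * q ^ 5 + 9 * q ^ 6 + 8 * q ^ 7 + 6 * q ^ 8 + 4 * q ^ 9 + 2 * q ^ 10 + q ^ 11 := by
    rw [B]; norm_num; rw [div_eq_iff h2']; ring
  have hC : _root_.C 5 = q ^ 2 + q ^ 3 + 2 * q ^ 4 + 2 * q ^ 5 + 3 * q ^ 6 + 2 * q ^ 7 + 2 * q ^ 8 + q ^ 9 + q ^ 10 := by
    have h2q : (2 : RatFunc ℚ) ≠ 0 := by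
      have e : (2 : RatFunc ℚ) = algebraMap (Polynomial ℚ) _ 2 := by rw [map_ofNat]
      rw [e]; exact RatFunc.algebraMap_ne_zero (by norm_num)
    rw [_root_.C]; norm_num
    rw [h6, h12, div_mul_eq_mul_div, one_mul, sub_eq_iff_eq_add,
      div_eq_iff h2q]
    ring
  have hT : T 5 = 1 + q + 2 * q ^ 2 + 2 * q ^ 3 + 3 * q ^ 4 + 2 * q ^ 5 + 2 * q ^ 6 + -1 * q ^ 9 + q ^ 12 + 2 * q ^ 13 + 2 * q ^ 14 + 2 * q ^ 15 + q ^ 16 + q ^ 17 := by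
    rw [T]; norm_num; rw [hA, hB, hC, h6, h4]; ring
  rw [h15, h3, h13, hT]; ring
end
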